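/- Let f ∈ S_{p,μ}, α ≥ β > 0 and δ > 0. If the derivative f^{(β)} exists and belongs to S_{p,μ}, then ω_α(f,δ)_{p,μ} ≤ δ^β · ω_{α−β}(f^{(β)},δ)_{p,μ} (with the convention ω_0(g,δ)_{p,μ} = ‖g‖_{p,μ} when α = β). -/

import Mathlib

open MeasureTheory Filter Topology Asymptotics

noncomputable section

/-- The `k`-th Fourier coefficient of a (2π-periodic) function `f : ℝ → ℂ`:
`f̂(k) = (2π)⁻¹ ∫_0^{2π} f(t) e^{-ikt} dt`. -/
def fcoeff (f : ℝ → ℂ) (k : ℤ) : ℂ :=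
  (1 / (2 * (Real.pi : ℂ))) *
    ∫ t in (0:ℝ)..(2 * Real.pi), f t * Complex.exp (-(Complex.I * (k : ℂ) * (t : ℂ)))

/-- The admissible set defining the Luxemburg norm:
`{a > 0 : Σ_k μ_k |f̂(k)/a|^{p_k} ≤ 1}` (with the sum required to converge). -/
def lpSet (p μ : ℤ → ℝ) (f : ℝ → ℂ) : Set ℝ :=
  {a : ℝ | 0 < a ∧
    Summable (fun k : ℤ => μ k * (‖fcoeff f k‖ / a) ^ (p k)) ∧
    ∑' k : ℤ, μ k * (‖fcoeff f k‖ / a) ^ (p k) ≤ 1}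

/-- The Luxemburg norm `‖f‖_{p,μ}`. -/
def luxNorm (p μ : ℤ → ℝ) (f : ℝ → ℂ) : ℝ := sInf (lpSet p μ f)

/-- Membership in the space `S_{p,μ}`: `f` is 2π-periodic, integrable on a period, and
has finite Luxemburg norm (i.e. the admissible set is nonempty). -/
def MemS (p μ : ℤ → ℝ) (f : ℝ → ℂ) : Prop :=
  Function.Periodic f (2 * Real.pi) ∧ IntervalIntegrable f volume 0 (2 * Real.pi) ∧
    (lpSet p μ f).Nonempty

/-- Generalized binomial coefficient `binom(α,j) = α(α−1)⋯(α−j+1)/j!`. -/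
def gbinom (α : ℝ) (j : ℕ) : ℝ :=
  (∏ i ∈ Finset.range j, (α - (i : ℝ))) / (j.factorial : ℝ)

/-- Fractional difference `Δ_h^α f(x) = Σ_{j=0}^∞ (−1)^j binom(α,j) f(x − jh)`. -/
def fracDiff (α h : ℝ) (f : ℝ → ℂ) (x : ℝ) : ℂ :=
  ∑' j : ℕ, (-1 : ℂ) ^ j * (gbinom α j : ℂ) * f (x - (j : ℝ) * h)

/-- Modulus of smoothness `ω_α(f,δ)_{p,μ} = sup_{|h| ≤ δ} ‖Δ_h^α f‖_{p,μ}`. -/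
def modulus (p μ : ℤ → ℝ) (α : ℝ) (f : ℝ → ℂ) (δ : ℝ) : ℝ :=
  ⨆ h : {h : ℝ // |h| ≤ δ}, luxNorm p μ (fracDiff α h.1 f)

/-- Trigonometric polynomial of degree at most `n - 1` with coefficients `c`:
`Σ_{|k| ≤ n-1} c_k e^{ikx}`. -/
def trigSum (c : ℤ → ℂ) (n : ℕ) (x : ℝ) : ℂ :=
  ∑ k ∈ Finset.Ioo (-(n : ℤ)) (n : ℤ), c k * Complex.exp (Complex.I * (k : ℂ) * (x : ℂ))

/-- Best approximation `E_n(f)_{p,μ}` of `f` by trigonometric polynomials of degree `≤ n-1`. -/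
def bestApprox (p μ : ℤ → ℝ) (n : ℕ) (f : ℝ → ℂ) : ℝ :=
  sInf {r : ℝ | ∃ c : ℤ → ℂ, r = luxNorm p μ (fun x => f x - trigSum c n x)}

/-- `g` is the ψ-derivative of `f`: `ĝ(k) = f̂(k)/ψ_k` for `k ≠ 0` (and `ĝ(0) = 0`),
with `g` 2π-periodic and integrable on a period. -/
def IsPsiDeriv (ψ : ℤ → ℂ) (f g : ℝ → ℂ) : Prop :=
  Function.Periodic g (2 * Real.pi) ∧ IntervalIntegrable g volume 0 (2 * Real.pi) ∧
    fcoeff g 0 = 0 ∧ ∀ k : ℤ, k ≠ 0 → fcoeff g k = fcoeff f k / ψ k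

/-- Trigonometric polynomial of degree at most `n`: `τ_n(x) = Σ_{|k| ≤ n} c_k e^{ikx}`. -/
def trigPoly (c : ℤ → ℂ) (n : ℕ) (x : ℝ) : ℂ :=
  ∑ k ∈ Finset.Icc (-(n : ℤ)) (n : ℤ), c k * Complex.exp (Complex.I * (k : ℂ) * (x : ℂ))

/-- ψ-derivative of the trigonometric polynomial with coefficients `c`:
`τ_n^ψ(x) = Σ_{0<|k|≤n} (c_k/ψ_k) e^{ikx}`. -/
def trigPolyPsi (ψ : ℤ → ℂ) (c : ℤ → ℂ) (n : ℕ) (x : ℝ) : ℂ :=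
  ∑ k ∈ Finset.Icc (-(n : ℤ)) (n : ℤ),
    (if k = 0 then 0 else c k / ψ k) * Complex.exp (Complex.I * (k : ℂ) * (x : ℂ))

open Finset Polynomial

theorem gbinom_zero (γ : ℝ) : gbinom γ 0 = 1 := by simp [gbinom]

theorem gbinom_succ (γ : ℝ) (j : ℕ) :
    gbinom γ (j + 1) = gbinom γ j * ((γ - j) / (j + 1)) := by
  simp only [gbinom, prod_range_succ, Nat.factorial_succ, Nat.cast_mul, Nat.cast_add,
    Nat.cast_one, div_mul_div_comm]
  ring

theorem smeval_int_real (p : Polynomial ℤ) (r : ℝ) :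
    p.smeval r = (p.map (Int.castRingHom ℝ)).eval r := by
  induction p using Polynomial.induction_on' with
  | add p q hp hq => simp [Polynomial.smeval_add, hp, hq]
  | monomial n a => simp [Polynomial.smeval_monomial, zsmul_eq_mul, Polynomial.map_monomial,
      eval_monomial]

theorem gbinom_eq_ringChoose (r : ℝ) (n : ℕ) : gbinom r n = Ring.choose r n := by
  have h3 : ∀ m : ℕ, (descPochhammer ℝ m).eval r = ∏ i ∈ range m, (r - i) := by
    intro m
    induction m with
    | zero => simp
    | succ m ih => rw [descPochhammer_succ_eval, ih, prod_range_succ]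
  have h := Ring.descPochhammer_eq_factorial_smul_choose r n
  have h2 : (descPochhammer ℤ n).smeval r = (descPochhammer ℝ n).eval r := by
    rw [smeval_int_real, ← descPochhammer_map (Int.castRingHom ℝ) n]
  rw [h2, h3] at h
  have hf : (n.factorial : ℝ) ≠ 0 := Nat.cast_ne_zero.mpr n.factorial_ne_zero
  rw [nsmul_eq_mul] at h
  rw [gbinom, h]
  field_simp

theorem gbinom_pascal (r : ℝ) (k : ℕ) :
    gbinom (r + 1) (k + 1) = gbinom r k + gbinom r (k + 1) := by
  simp only [gbinom_eq_ringChoose]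
  exact Ring.choose_succ_succ r k

theorem gbinom_vandermonde (a b : ℝ) (n : ℕ) :
    gbinom (a + b) n = ∑ ij ∈ antidiagonal n, gbinom a ij.1 * gbinom b ij.2 := by
  simp only [gbinom_eq_ringChoose]
  exact Ring.add_choose_eq n (Commute.all a b)

theorem gbinom_nat_eq_zero {m : ℕ} {j : ℕ} (h : m < j) : gbinom (m : ℝ) j = 0 := by
  have h0 : ((m:ℝ) - (m:ℕ)) = 0 := by simp
  simp only [gbinom]
  rw [Finset.prod_eq_zero (Finset.mem_range.mpr h) h0]
  simp

theorem abs_gbinom_sub_one_le {θ : ℝ} (h0 : 0 ≤ θ) (h1 : θ < 1) (n : ℕ) :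
    |gbinom (θ - 1) n| ≤ 1 := by
  rw [gbinom, abs_div, abs_prod]
  rw [abs_of_nonneg (by positivity : (0:ℝ) ≤ (n.factorial : ℝ))]
  rw [div_le_one (by positivity)]
  calc ∏ i ∈ range n, |θ - 1 - (i:ℝ)| ≤ ∏ i ∈ range n, ((i:ℝ) + 1) := by
        apply Finset.prod_le_prod (fun i _ => abs_nonneg _)
        intro i _
        rw [abs_of_nonpos (by linarith [Nat.cast_nonneg (α := ℝ) i] : θ - 1 - (i:ℝ) ≤ 0)]
        linarith
    _ = (n.factorial : ℝ) := by
        induction n with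
        | zero => simp
        | succ n ih => rw [prod_range_succ, ih, Nat.factorial_succ]; push_cast; ring

theorem gbinom_small_sign {θ : ℝ} (h0 : 0 ≤ θ) (h1 : θ < 1) (j : ℕ) :
    |gbinom θ (j + 1)| = (-1)^j * gbinom θ (j+1) := by
  induction j with
  | zero =>
    rw [gbinom_succ, gbinom_zero]
    simp only [pow_zero, one_mul, Nat.cast_zero, sub_zero]
    rw [abs_of_nonneg (by positivity)]
  | succ j ih =>
    rw [gbinom_succ θ (j+1), abs_mul, ih, abs_div]
    have hj : (0:ℝ) ≤ (j:ℝ) := Nat.cast_nonneg j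
    have hneg : θ - ((j:ℕ)+1:ℕ) ≤ 0 := by push_cast; linarith
    rw [abs_of_nonpos (by push_cast at hneg ⊢; linarith : (θ - (((j+1):ℕ):ℝ)) ≤ 0)]
    rw [abs_of_nonneg (by push_cast; linarith : (0:ℝ) ≤ (((j+1):ℕ):ℝ) + 1)]
    push_cast
    ring

theorem partial_sum_abs_gbinom {θ : ℝ} (h0 : 0 ≤ θ) (h1 : θ < 1) (n : ℕ) :
    ∑ j ∈ range n, |gbinom θ (j + 1)| = 1 - (-1)^n * gbinom (θ - 1) n := by
  induction n with
  | zero => simp [gbinom_zero]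
  | succ n ih =>
    rw [sum_range_succ, ih, gbinom_small_sign h0 h1 n]
    have hpas : gbinom θ (n+1) = gbinom (θ-1) n + gbinom (θ-1) (n+1) := by
      have := gbinom_pascal (θ - 1) n
      rwa [sub_add_cancel] at this
    rw [hpas]
    ring

theorem abs_gbinom_succ_of_le {γ : ℝ} {j : ℕ} (h : γ ≤ j) :
    |gbinom γ (j+1)| = |gbinom γ j| * (((j:ℝ) - γ)/(j+1)) := by
  rw [gbinom_succ, abs_mul, abs_div, abs_of_nonpos (by linarith : γ - (j:ℝ) ≤ 0),
    abs_of_nonneg (by positivity : (0:ℝ) ≤ (j:ℝ) + 1), neg_sub]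

theorem summable_abs_gbinom {γ : ℝ} (hγ : 0 ≤ γ) : Summable (fun j => |gbinom γ j|) := by
  rcases eq_or_lt_of_le hγ with h0 | hpos
  · apply summable_of_ne_finset_zero (s := {0})
    intro j hj
    simp only [Finset.mem_singleton] at hj
    have h1 : gbinom (((0:ℕ):ℝ)) j = 0 := gbinom_nat_eq_zero (Nat.pos_of_ne_zero hj)
    simp only [Nat.cast_zero] at h1
    simp [← h0, h1]
  obtain ⟨N, hγN⟩ : ∃ N : ℕ, γ < N := ⟨⌊γ⌋₊ + 1, by exact_mod_cast Nat.lt_floor_add_one γ⟩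
  have key : ∀ n : ℕ, γ * ∑ j ∈ range n, |gbinom γ (N + j)| =
      N * |gbinom γ N| - (N + n) * |gbinom γ (N + n)| := by
    intro n
    induction n with
    | zero => simp
    | succ n ih =>
      rw [sum_range_succ, mul_add, ih]
      have hle : γ ≤ ((N + n : ℕ) : ℝ) := by push_cast; linarith [Nat.cast_nonneg (α := ℝ) n]
      have hrec := abs_gbinom_succ_of_le hle
      have hNn : (0:ℝ) < ((N+n:ℕ):ℝ) + 1 := by positivity
      have h2 : (((N+n:ℕ):ℝ) + 1) * |gbinom γ (N + n + 1)| =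
          (((N+n:ℕ):ℝ) - γ) * |gbinom γ (N + n)| := by
        rw [show N + n + 1 = (N + n) + 1 from rfl, hrec]
        field_simp
      have h3 : N + (n+1) = N + n + 1 := rfl
      rw [h3]
      push_cast at h2 ⊢
      linarith [h2]
  have hbound : ∀ n : ℕ, ∑ j ∈ range n, |gbinom γ (N + j)| ≤ N * |gbinom γ N| / γ := by
    intro n
    rw [le_div_iff₀ hpos, mul_comm]
    have h1 : (0:ℝ) ≤ ((N:ℝ) + n) * |gbinom γ (N + n)| := by positivity
    linarith [key n]
  have hsum : Summable (fun j => |gbinom γ (N + j)|) :=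
    summable_of_sum_range_le (fun j => abs_nonneg _) hbound
  have hsum' : Summable (fun j => |gbinom γ (j + N)|) := by
    simpa [add_comm] using hsum
  exact (summable_nat_add_iff N).mp hsum'

noncomputable def mS (γ : ℝ) (z : ℂ) : ℂ := ∑' j : ℕ, (gbinom γ j : ℂ) * z ^ j

theorem norm_mS_term_le {γ : ℝ} {z : ℂ} (hz : ‖z‖ ≤ 1) (j : ℕ) :
    ‖(gbinom γ j : ℂ) * z ^ j‖ ≤ |gbinom γ j| := by
  rw [norm_mul, norm_pow, Complex.norm_real, Real.norm_eq_abs]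
  calc |gbinom γ j| * ‖z‖ ^ j ≤ |gbinom γ j| * 1 := by
        apply mul_le_mul_of_nonneg_left _ (abs_nonneg _)
        exact pow_le_one₀ (norm_nonneg z) hz
    _ = |gbinom γ j| := mul_one _

theorem summable_norm_mS {γ : ℝ} (hγ : 0 ≤ γ) {z : ℂ} (hz : ‖z‖ ≤ 1) :
    Summable (fun j => ‖(gbinom γ j : ℂ) * z ^ j‖) :=
  Summable.of_nonneg_of_le (fun j => norm_nonneg _) (norm_mS_term_le hz)
    (summable_abs_gbinom hγ)

theorem summable_mS {γ : ℝ} (hγ : 0 ≤ γ) {z : ℂ} (hz : ‖z‖ ≤ 1) :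
    Summable (fun j => (gbinom γ j : ℂ) * z ^ j) :=
  (summable_norm_mS hγ hz).of_norm

theorem norm_mS_le_tsum {γ : ℝ} (hγ : 0 ≤ γ) {z : ℂ} (hz : ‖z‖ ≤ 1) :
    ‖mS γ z‖ ≤ ∑' j, |gbinom γ j| := by
  refine (norm_tsum_le_tsum_norm (summable_norm_mS hγ hz)).trans ?_
  exact Summable.tsum_le_tsum (norm_mS_term_le hz) (summable_norm_mS hγ hz) (summable_abs_gbinom hγ)

theorem mS_mul {a b : ℝ} (ha : 0 ≤ a) (hb : 0 ≤ b) {z : ℂ} (hz : ‖z‖ ≤ 1) :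
    mS a z * mS b z = mS (a + b) z := by
  rw [mS, mS, tsum_mul_tsum_eq_tsum_sum_antidiagonal_of_summable_norm
    (summable_norm_mS ha hz) (summable_norm_mS hb hz)]
  rw [mS]
  congr 1
  funext n
  have : ∀ ij ∈ antidiagonal n,
      ((gbinom a ij.1 : ℂ) * z ^ ij.1) * ((gbinom b ij.2 : ℂ) * z ^ ij.2) =
      ((gbinom a ij.1 * gbinom b ij.2 : ℝ) : ℂ) * z ^ n := by
    intro ij hij
    rw [Finset.HasAntidiagonal.mem_antidiagonal] at hij
    rw [← hij, pow_add]
    push_cast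
    ring
  rw [Finset.sum_congr rfl this, ← Finset.sum_mul, ← Complex.ofReal_sum,
    ← gbinom_vandermonde]

theorem mS_zero {z : ℂ} : mS 0 z = 1 := by
  rw [mS, tsum_eq_single 0]
  · simp [gbinom_zero]
  · intro j hj
    have h1 : gbinom (((0:ℕ):ℝ)) j = 0 := gbinom_nat_eq_zero (Nat.pos_of_ne_zero hj)
    simp only [Nat.cast_zero] at h1
    simp [h1]

theorem mS_one {z : ℂ} : mS 1 z = 1 + z := by
  rw [mS, tsum_eq_sum (s := range 2)]
  · rw [Finset.sum_range_succ, Finset.sum_range_one]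
    have h1 : gbinom 1 1 = 1 := by
      rw [show (1:ℕ) = 0 + 1 from rfl, gbinom_succ, gbinom_zero]; norm_num
    simp [gbinom_zero, h1]
  · intro j hj
    rw [Finset.mem_range, not_lt] at hj
    have h1 : gbinom (((1:ℕ):ℝ)) j = 0 := gbinom_nat_eq_zero (by omega)
    simp only [Nat.cast_one] at h1
    simp [h1]

theorem mS_nat_shift {z : ℂ} (hz : ‖z‖ ≤ 1) (k : ℕ) :
    ∀ (x : ℝ), 0 ≤ x → mS (x + k) z = (1 + z)^k * mS x z := by
  induction k with
  | zero => intro x hx; simp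
  | succ k ih =>
    intro x hx
    have h1 : x + ((k:ℕ) + 1 : ℕ) = (x + k) + 1 := by push_cast; ring
    rw [h1, ← mS_mul (by positivity) zero_le_one hz, ih x hx, mS_one]
    ring

theorem mS_pow {β : ℝ} (hβ : 0 ≤ β) {z : ℂ} (hz : ‖z‖ ≤ 1) (n : ℕ) :
    (mS β z)^n = mS (n * β) z := by
  induction n with
  | zero => simp [mS_zero]
  | succ n ih =>
    rw [pow_succ, ih, mS_mul (by positivity) hβ hz]
    congr 1
    push_cast
    ring

theorem norm_mS_theta_le_three {θ : ℝ} (h0 : 0 ≤ θ) (h1 : θ < 1) {z : ℂ} (hz : ‖z‖ ≤ 1) :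
    ‖mS θ z‖ ≤ 3 := by
  refine (norm_mS_le_tsum h0 hz).trans ?_
  have hsum := summable_abs_gbinom h0
  rw [Summable.tsum_eq_zero_add hsum]
  have htail : ∑' j, |gbinom θ (j + 1)| ≤ 2 := by
    apply Summable.tsum_le_of_sum_range_le ((summable_nat_add_iff 1).mpr hsum)
    intro n
    rw [partial_sum_abs_gbinom h0 h1 n]
    have h2 : |(-1:ℝ)^n * gbinom (θ-1) n| ≤ 1 := by
      rw [abs_mul, abs_pow, abs_neg, abs_one, one_pow, one_mul]
      exact abs_gbinom_sub_one_le h0 h1 n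
    have := neg_abs_le ((-1:ℝ)^n * gbinom (θ-1) n)
    linarith [abs_nonneg ((-1:ℝ)^n * gbinom (θ-1) n)]
  have h00 : |gbinom θ 0| = 1 := by rw [gbinom_zero]; norm_num
  rw [h00]
  linarith

theorem key_small {β : ℝ} (hβ : 0 < β) (hβ1 : β < 1) {z : ℂ} (hz : ‖z‖ ≤ 1) :
    ‖mS β z‖ ≤ ‖1 + z‖ ^ β := by
  set y := ‖mS β z‖ with hy
  set u := ‖1 + z‖ with hu
  have hy0 : 0 ≤ y := norm_nonneg _
  have hu0 : 0 ≤ u := norm_nonneg _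
  have hyn : ∀ n : ℕ, y ^ n ≤ 3 * u ^ (⌊(n:ℝ) * β⌋₊) := by
    intro n
    have hnb : (0:ℝ) ≤ (n:ℝ) * β := by positivity
    have hθ0 : 0 ≤ (n:ℝ) * β - (⌊(n:ℝ)*β⌋₊ : ℝ) := by
      have := Nat.floor_le hnb; linarith
    have hθ1 : (n:ℝ) * β - (⌊(n:ℝ)*β⌋₊ : ℝ) < 1 := by
      have := Nat.lt_floor_add_one ((n:ℝ)*β); linarith
    have hdec : (n:ℝ) * β = ((n:ℝ)*β - (⌊(n:ℝ)*β⌋₊ : ℝ)) + (⌊(n:ℝ)*β⌋₊ : ℕ) := by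
      push_cast; ring
    have := mS_pow hβ.le hz n
    rw [hdec, mS_nat_shift hz _ _ hθ0] at this
    calc y ^ n = ‖(mS β z)^n‖ := by rw [hy, ← norm_pow]
      _ = u ^ (⌊(n:ℝ)*β⌋₊) * ‖mS ((n:ℝ)*β - (⌊(n:ℝ)*β⌋₊ : ℝ)) z‖ := by
          rw [this, norm_mul, norm_pow]
      _ ≤ u ^ (⌊(n:ℝ)*β⌋₊) * 3 := by
          apply mul_le_mul_of_nonneg_left (norm_mS_theta_le_three hθ0 hθ1 hz) (by positivity)
      _ = 3 * u ^ (⌊(n:ℝ)*β⌋₊) := by ring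
  rcases eq_or_lt_of_le hu0 with hu0' | hupos
  · -- u = 0
    obtain ⟨n, hn1, hnb⟩ : ∃ n : ℕ, 1 ≤ n ∧ 1 ≤ (n:ℝ) * β := by
      refine ⟨⌈1/β⌉₊ + 1, by omega, ?_⟩
      have h2 : (1:ℝ)/β ≤ (⌈1/β⌉₊ : ℝ) + 1 := by
        have := Nat.le_ceil (1/β); push_cast; linarith
      calc (1:ℝ) = (1/β) * β := by field_simp
        _ ≤ ((⌈1/β⌉₊:ℝ) + 1) * β := by apply mul_le_mul_of_nonneg_right h2 hβ.le
        _ = ((⌈1/β⌉₊ + 1 : ℕ):ℝ) * β := by push_cast; ring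
    have hfl : 1 ≤ ⌊(n:ℝ) * β⌋₊ := by
      rw [Nat.le_floor_iff (by positivity)]
      exact_mod_cast hnb
    have h3 : y ^ n ≤ 0 := by
      have := hyn n
      rw [← hu0', zero_pow (by omega : ⌊(n:ℝ)*β⌋₊ ≠ 0)] at this
      linarith
    have hy' : y = 0 := by
      by_contra hne
      have : 0 < y := lt_of_le_of_ne hy0 (Ne.symm hne)
      exact absurd h3 (not_le.mpr (by positivity))
    rw [hy', ← hu0']
    exact Real.rpow_nonneg le_rfl β
  · -- u > 0
    have hstep : ∀ n : ℕ, 1 ≤ n →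
        y ≤ (3:ℝ) ^ ((1:ℝ)/n) * u ^ ((⌊(n:ℝ)*β⌋₊ : ℝ)/n) := by
      intro n hn
      have hn0 : (n:ℝ) ≠ 0 := Nat.cast_ne_zero.mpr (by omega)
      have h1 : y = (y ^ n) ^ ((1:ℝ)/n) := by
        rw [← Real.rpow_natCast y n, ← Real.rpow_mul hy0]
        rw [mul_one_div, div_self hn0, Real.rpow_one]
      rw [h1]
      have h2 : (y ^ n) ^ ((1:ℝ)/n) ≤ (3 * u ^ (⌊(n:ℝ)*β⌋₊)) ^ ((1:ℝ)/n) :=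
        Real.rpow_le_rpow (by positivity) (hyn n) (by positivity)
      refine h2.trans_eq ?_
      rw [Real.mul_rpow (by norm_num) (by positivity),
        ← Real.rpow_natCast u (⌊(n:ℝ)*β⌋₊), ← Real.rpow_mul hu0, mul_one_div]
    have hT1 : Tendsto (fun n : ℕ => (3:ℝ) ^ ((1:ℝ)/n)) atTop (𝓝 1) := by
      have := (tendsto_const_nhds (x := (3:ℝ)) (f := atTop (α := ℕ))).rpow
        tendsto_one_div_atTop_nhds_zero_nat (Or.inl (by norm_num))
      simpa using this
    have hT2 : Tendsto (fun n : ℕ => (⌊(n:ℝ)*β⌋₊ : ℝ)/n) atTop (𝓝 β) := by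
      apply tendsto_of_tendsto_of_tendsto_of_le_of_le'
        (g := fun n : ℕ => β - (1:ℝ)/n) (h := fun _ => β)
      · have : Tendsto (fun n : ℕ => (1:ℝ)/n) atTop (𝓝 0) :=
          tendsto_one_div_atTop_nhds_zero_nat
        simpa using tendsto_const_nhds.sub this
      · exact tendsto_const_nhds
      · filter_upwards [eventually_ge_atTop 1] with n hn
        have hn0 : (0:ℝ) < (n:ℝ) := by exact_mod_cast Nat.pos_of_ne_zero (by omega)
        rw [sub_le_iff_le_add, ← add_div, le_div_iff₀ hn0]
        have := Nat.lt_floor_add_one ((n:ℝ)*β)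
        linarith [this]
      · filter_upwards [eventually_ge_atTop 1] with n hn
        have hn0 : (0:ℝ) < (n:ℝ) := by exact_mod_cast Nat.pos_of_ne_zero (by omega)
        rw [div_le_iff₀ hn0]
        have := Nat.floor_le (by positivity : (0:ℝ) ≤ (n:ℝ)*β)
        linarith
    have hT3 : Tendsto (fun n : ℕ => (3:ℝ) ^ ((1:ℝ)/n) * u ^ ((⌊(n:ℝ)*β⌋₊ : ℝ)/n))
        atTop (𝓝 (u ^ β)) := by
      have hu' : Tendsto (fun n : ℕ => u ^ ((⌊(n:ℝ)*β⌋₊ : ℝ)/n)) atTop (𝓝 (u ^ β)) :=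
        (tendsto_const_nhds (x := u)).rpow hT2 (Or.inl (ne_of_gt hupos))
      simpa using hT1.mul hu'
    exact ge_of_tendsto hT3 (eventually_atTop.mpr ⟨1, hstep⟩)

theorem norm_mS_le {γ : ℝ} (hγ : 0 ≤ γ) {z : ℂ} (hz : ‖z‖ ≤ 1) :
    ‖mS γ z‖ ≤ ‖1 + z‖ ^ γ := by
  have hθ0 : 0 ≤ γ - (⌊γ⌋₊ : ℝ) := by have := Nat.floor_le hγ; linarith
  have hθ1 : γ - (⌊γ⌋₊ : ℝ) < 1 := by have := Nat.lt_floor_add_one γ; linarith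
  have hdec : γ = (γ - (⌊γ⌋₊ : ℝ)) + (⌊γ⌋₊ : ℕ) := by push_cast; ring
  have hu0 : (0:ℝ) ≤ ‖1 + z‖ := norm_nonneg _
  rw [show mS γ z = mS ((γ - (⌊γ⌋₊ : ℝ)) + (⌊γ⌋₊ : ℕ)) z from by rw [← hdec],
    mS_nat_shift hz _ _ hθ0, norm_mul, norm_pow]
  rcases eq_or_lt_of_le hθ0 with hθz | hθpos
  · -- θ = 0
    rw [← hθz, mS_zero, norm_one, mul_one]
    have hγk : γ = (⌊γ⌋₊ : ℝ) := by linarith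
    rw [← Real.rpow_natCast ‖1+z‖ ⌊γ⌋₊]
    nth_rewrite 2 [hγk]
    exact le_rfl
  · calc ‖1+z‖ ^ (⌊γ⌋₊) * ‖mS (γ - (⌊γ⌋₊ : ℝ)) z‖
        ≤ ‖1+z‖ ^ (⌊γ⌋₊) * ‖1+z‖ ^ (γ - (⌊γ⌋₊ : ℝ)) := by
          apply mul_le_mul_of_nonneg_left (key_small hθpos hθ1 hz) (by positivity)
      _ = ‖1+z‖ ^ γ := by
          rw [← Real.rpow_natCast ‖1+z‖ (⌊γ⌋₊), ← Real.rpow_add' hu0]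
          · congr 1; ring
          · intro h; linarith [h]

theorem two_pi_pos' : (0:ℝ) < 2 * Real.pi := by positivity

/-- periodic + integrable on a period ⇒ integrable on any period window -/
theorem periodic_intervalIntegrable {F : ℝ → ℂ} {T : ℝ} (hT : 0 < T)
    (hper : Function.Periodic F T) (hint : IntervalIntegrable F volume 0 T) (s : ℝ) :
    IntervalIntegrable F volume s (s + T) := by
  set q : ℤ := ⌊s / T⌋ with hq
  set r : ℝ := s - q * T with hr
  have hfr : r = T * Int.fract (s / T) := by
    rw [hr, Int.fract]
    field_simp
    ring
  have hr0 : 0 ≤ r := by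
    rw [hfr]; exact mul_nonneg hT.le (Int.fract_nonneg _)
  have hrT : r ≤ T := by
    rw [hfr]
    calc T * Int.fract (s / T) ≤ T * 1 := by
          exact mul_le_mul_of_nonneg_left (Int.fract_lt_one _).le hT.le
      _ = T := mul_one T
  have I1 : IntervalIntegrable F volume r T := by
    apply hint.mono_set
    rw [Set.uIcc_of_le hrT, Set.uIcc_of_le hT.le]
    exact Set.Icc_subset_Icc hr0 le_rfl
  have I2' : IntervalIntegrable F volume 0 r := by
    apply hint.mono_set
    rw [Set.uIcc_of_le hr0, Set.uIcc_of_le hT.le]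
    exact Set.Icc_subset_Icc le_rfl hrT
  have I2 : IntervalIntegrable (fun x => F (x - T)) volume (0 + T) (r + T) :=
    I2'.comp_sub_right T
  have I2'' : IntervalIntegrable F volume T (r + T) := by
    have he : (fun x => F (x - T)) = F := funext fun x => hper.sub_eq x
    rw [he] at I2
    rwa [zero_add] at I2
  have I3 : IntervalIntegrable F volume r (r + T) := I1.trans I2''
  have I4 : IntervalIntegrable (fun x => F (x - q * T)) volume (r + q * T) (r + T + q * T) :=
    I3.comp_sub_right ((q : ℝ) * T)
  have he : (fun x => F (x - q * T)) = F := funext fun x => hper.sub_int_mul_eq q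
  rw [he] at I4
  have h1 : r + q * T = s := by rw [hr]; ring
  have h2 : r + T + q * T = s + T := by rw [hr]; ring
  rwa [h1, h2] at I4

theorem periodic_comp_sub_intervalIntegrable {F : ℝ → ℂ} {T : ℝ} (hT : 0 < T)
    (hper : Function.Periodic F T) (hint : IntervalIntegrable F volume 0 T) (c : ℝ) :
    IntervalIntegrable (fun t => F (t - c)) volume 0 T := by
  have h1 := (periodic_intervalIntegrable hT hper hint (-c)).comp_sub_right c
  have h2 : -c + c = (0:ℝ) := by ring
  have h3 : -c + T + c = T := by ring
  rwa [h2, h3] at h1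

/-- the function t ↦ F t · e^{-ikt} is 2π-periodic -/
theorem P_periodic {F : ℝ → ℂ} (hper : Function.Periodic F (2 * Real.pi)) (k : ℤ) :
    Function.Periodic (fun s : ℝ => F s * Complex.exp (-(Complex.I * (k:ℂ) * (s:ℂ))))
      (2 * Real.pi) := by
  intro s
  have h1 : F (s + 2 * Real.pi) = F s := hper s
  have h2 : Complex.exp (-(Complex.I * (k:ℂ) * ((s + 2*Real.pi : ℝ):ℂ))) =
      Complex.exp (-(Complex.I * (k:ℂ) * (s:ℂ))) *
        Complex.exp (((-k : ℤ):ℂ) * (2 * (Real.pi:ℂ) * Complex.I)) := by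
    rw [← Complex.exp_add]
    congr 1
    push_cast
    ring
  simp only [h1, h2, Complex.exp_int_mul_two_pi_mul_I, mul_one]

theorem fcoeff_shift {F : ℝ → ℂ} (hper : Function.Periodic F (2 * Real.pi)) (k : ℤ) (c : ℝ) :
    fcoeff (fun x => F (x - c)) k = Complex.exp (-(Complex.I * (k:ℂ) * (c:ℂ))) * fcoeff F k := by
  set P : ℝ → ℂ := fun s => F s * Complex.exp (-(Complex.I * (k:ℂ) * (s:ℂ))) with hP
  have hpt : (fun t : ℝ => F (t - c) * Complex.exp (-(Complex.I * (k:ℂ) * (t:ℂ)))) =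
      fun t : ℝ => Complex.exp (-(Complex.I * (k:ℂ) * (c:ℂ))) * P (t - c) := by
    funext t
    rw [hP]
    simp only
    have he : Complex.exp (-(Complex.I * (k:ℂ) * (t:ℂ))) =
        Complex.exp (-(Complex.I * (k:ℂ) * (c:ℂ))) *
          Complex.exp (-(Complex.I * (k:ℂ) * ((t - c : ℝ):ℂ))) := by
      rw [← Complex.exp_add]
      congr 1
      push_cast
      ring
    rw [he]
    ring
  rw [fcoeff, hpt, intervalIntegral.integral_const_mul]
  have hshift : (∫ t in (0:ℝ)..(2*Real.pi), P (t - c)) = ∫ t in (0:ℝ)..(2*Real.pi), P t := by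
    rw [intervalIntegral.integral_comp_sub_right P c]
    rw [show (0:ℝ) - c = -c by ring, show 2*Real.pi - c = -c + 2*Real.pi by ring]
    rw [(P_periodic hper k).intervalIntegral_add_eq (-c) 0, zero_add]
  rw [hshift, fcoeff]
  ring

theorem norm_exp_neg_I_int (k : ℤ) (t : ℝ) :
    ‖Complex.exp (-(Complex.I * (k:ℂ) * (t:ℂ)))‖ = 1 := by
  rw [show -(Complex.I * (k:ℂ) * (t:ℂ)) = ((-(k * t) : ℝ):ℂ) * Complex.I by push_cast; ring]
  rw [Complex.norm_exp_ofReal_mul_I]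

theorem norm_shift_integral {F : ℝ → ℂ} (hper : Function.Periodic F (2 * Real.pi)) (c : ℝ) :
    (∫ t in (0:ℝ)..(2 * Real.pi), ‖F (t - c)‖) = ∫ t in (0:ℝ)..(2 * Real.pi), ‖F t‖ := by
  have hpn : Function.Periodic (fun x : ℝ => ‖F x‖) (2 * Real.pi) := fun s => by simp [hper s]
  rw [intervalIntegral.integral_comp_sub_right (fun t => ‖F t‖) c]
  rw [show (0:ℝ) - c = -c by ring, show 2*Real.pi - c = -c + 2*Real.pi by ring]
  rw [hpn.intervalIntegral_add_eq (-c) 0, zero_add]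

theorem fcoeff_fracDiff {γ : ℝ} (hγ : 0 ≤ γ) {F : ℝ → ℂ}
    (hper : Function.Periodic F (2 * Real.pi))
    (hint : IntervalIntegrable F volume 0 (2 * Real.pi)) (h : ℝ) (k : ℤ) :
    fcoeff (fracDiff γ h F) k =
      mS γ (-(Complex.exp (-(Complex.I * (k:ℂ) * (h:ℂ))))) * fcoeff F k := by
  have h2π : (0:ℝ) ≤ 2 * Real.pi := two_pi_pos'.le
  set e : ℝ → ℂ := fun t => Complex.exp (-(Complex.I * (k:ℂ) * (t:ℂ))) with he
  set G : ℕ → ℝ → ℂ := fun j t =>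
    ((-1:ℂ)^j * (gbinom γ j : ℂ)) * (F (t - (j:ℝ)*h) * e t) with hG
  have hcont : Continuous e := by
    rw [he]; exact Complex.continuous_exp.comp (by continuity)
  -- step A
  have hA : ∀ t : ℝ, fracDiff γ h F t * e t = ∑' j, G j t := by
    intro t
    rw [fracDiff, ← tsum_mul_right]
    congr 1
    funext j
    rw [hG]
    ring
  -- step B
  have hB : ∀ j : ℕ, IntegrableOn (G j) (Set.Ioc (0:ℝ) (2*Real.pi)) volume := by
    intro j
    have base := periodic_comp_sub_intervalIntegrable two_pi_pos' hper hint ((j:ℝ)*h)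
    have withe := base.mul_continuousOn (hcont.continuousOn)
    have gj := withe.const_mul ((-1:ℂ)^j * (gbinom γ j : ℂ))
    exact (intervalIntegrable_iff_integrableOn_Ioc_of_le h2π).mp gj
  -- step C
  have hC : ∀ j : ℕ, (∫ t in Set.Ioc (0:ℝ) (2*Real.pi), ‖G j t‖) =
      |gbinom γ j| * ∫ t in (0:ℝ)..(2*Real.pi), ‖F t‖ := by
    intro j
    have hnorm : ∀ t : ℝ, ‖G j t‖ = |gbinom γ j| * ‖F (t - (j:ℝ)*h)‖ := by
      intro t
      rw [hG]
      simp only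
      rw [norm_mul, norm_mul, norm_mul, norm_pow, norm_neg, norm_one, one_pow, one_mul,
        he]
      simp only
      rw [norm_exp_neg_I_int k t, mul_one, Complex.norm_real, Real.norm_eq_abs]
    simp only [hnorm]
    rw [MeasureTheory.integral_const_mul]
    congr 1
    rw [← intervalIntegral.integral_of_le h2π]
    exact norm_shift_integral hper ((j:ℝ)*h)
  have hCsum : Summable (fun j => ∫ t in Set.Ioc (0:ℝ) (2*Real.pi), ‖G j t‖) := by
    simp only [hC]
    exact (summable_abs_gbinom hγ).mul_right _
  -- step D
  have hD : ∑' j, (∫ t in Set.Ioc (0:ℝ) (2*Real.pi), G j t) =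
      ∫ t in Set.Ioc (0:ℝ) (2*Real.pi), ∑' j, G j t :=
    integral_tsum_of_summable_integral_norm hB hCsum
  -- assemble
  rw [fcoeff]
  have h1 : (∫ t in (0:ℝ)..(2*Real.pi),
      fracDiff γ h F t * Complex.exp (-(Complex.I * (k:ℂ) * (t:ℂ)))) =
      ∫ t in Set.Ioc (0:ℝ) (2*Real.pi), ∑' j, G j t := by
    rw [intervalIntegral.integral_of_le h2π]
    congr 1
    funext t
    exact hA t
  rw [h1, ← hD, ← tsum_mul_left]
  have h2 : ∀ j : ℕ, (1 / (2 * (Real.pi:ℂ))) * (∫ t in Set.Ioc (0:ℝ) (2*Real.pi), G j t) =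
      ((gbinom γ j : ℂ)) *
        (-(Complex.exp (-(Complex.I * (k:ℂ) * (h:ℂ)))))^j * fcoeff F k := by
    intro j
    have h3 : (∫ t in Set.Ioc (0:ℝ) (2*Real.pi), G j t) =
        ((-1:ℂ)^j * (gbinom γ j : ℂ)) *
          ∫ t in (0:ℝ)..(2*Real.pi), F (t - (j:ℝ)*h) * e t := by
      rw [← intervalIntegral.integral_of_le h2π, hG]
      simp only
      rw [intervalIntegral.integral_const_mul]
    rw [h3]
    have h4 : (1 / (2 * (Real.pi:ℂ))) * (∫ t in (0:ℝ)..(2*Real.pi), F (t - (j:ℝ)*h) * e t) =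
        fcoeff (fun x => F (x - (j:ℝ)*h)) k := by
      rw [fcoeff, he]
    have h5 := fcoeff_shift hper k ((j:ℝ)*h)
    have h6 : (-(Complex.exp (-(Complex.I * (k:ℂ) * (h:ℂ)))))^j =
        (-1:ℂ)^j * Complex.exp (-(Complex.I * (k:ℂ) * (((j:ℝ)*h : ℝ):ℂ))) := by
      rw [neg_pow, ← Complex.exp_nat_mul]
      congr 2
      push_cast
      ring
    calc (1 / (2 * (Real.pi:ℂ))) * (((-1:ℂ)^j * (gbinom γ j : ℂ)) *
          ∫ t in (0:ℝ)..(2*Real.pi), F (t - (j:ℝ)*h) * e t)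
        = ((-1:ℂ)^j * (gbinom γ j : ℂ)) * ((1 / (2 * (Real.pi:ℂ))) *
            ∫ t in (0:ℝ)..(2*Real.pi), F (t - (j:ℝ)*h) * e t) := by ring
      _ = ((-1:ℂ)^j * (gbinom γ j : ℂ)) *
            (Complex.exp (-(Complex.I * (k:ℂ) * (((j:ℝ)*h:ℝ):ℂ))) * fcoeff F k) := by
          rw [h4, h5]
      _ = ((gbinom γ j : ℂ)) *
            (-(Complex.exp (-(Complex.I * (k:ℂ) * (h:ℂ)))))^j * fcoeff F k := by
          rw [h6]; ring
  calc ∑' j, (1 / (2 * (Real.pi:ℂ))) * (∫ t in Set.Ioc (0:ℝ) (2*Real.pi), G j t)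
      = ∑' j, ((gbinom γ j : ℂ)) *
          (-(Complex.exp (-(Complex.I * (k:ℂ) * (h:ℂ)))))^j * fcoeff F k := by
        congr 1; funext j; exact h2 j
    _ = mS γ (-(Complex.exp (-(Complex.I * (k:ℂ) * (h:ℂ))))) * fcoeff F k := by
        rw [mS, ← tsum_mul_right]

theorem luxNorm_nonneg (p μ : ℤ → ℝ) (f : ℝ → ℂ) : 0 ≤ luxNorm p μ f :=
  Real.sInf_nonneg (fun _ hx => hx.1.le)

theorem norm_one_sub_exp (s : ℝ) : ‖(1:ℂ) - Complex.exp (-(Complex.I * (s:ℂ)))‖ ≤ |s| := by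
  have h1 : -(Complex.I * (s:ℂ)) = ((-s : ℝ):ℂ) * Complex.I := by push_cast; ring
  rw [h1, Complex.exp_mul_I]
  have h2 : Complex.cos ((-s:ℝ):ℂ) = ((Real.cos (-s) : ℝ):ℂ) := (Complex.ofReal_cos _).symm
  have h3 : Complex.sin ((-s:ℝ):ℂ) = ((Real.sin (-s) : ℝ):ℂ) := (Complex.ofReal_sin _).symm
  rw [h2, h3, Real.cos_neg, Real.sin_neg]
  have h4 : (1:ℂ) - (((Real.cos s : ℝ):ℂ) + ((-Real.sin s : ℝ):ℂ) * Complex.I) =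
      ((1 - Real.cos s : ℝ):ℂ) + ((Real.sin s : ℝ):ℂ) * Complex.I := by
    push_cast; ring
  rw [h4]
  have h5 : ‖((1 - Real.cos s : ℝ):ℂ) + ((Real.sin s : ℝ):ℂ) * Complex.I‖^2 =
      (1 - Real.cos s)^2 + (Real.sin s)^2 := by
    rw [Complex.sq_norm, Complex.normSq_add_mul_I]
  have h6 : (1 - Real.cos s)^2 + (Real.sin s)^2 = 2 - 2 * Real.cos s := by
    have := Real.sin_sq_add_cos_sq s
    nlinarith [this]
  have h7 : 2 - 2 * Real.cos s ≤ s^2 := by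
    have := Real.one_sub_sq_div_two_le_cos (x := s)
    nlinarith [this]
  have h8 : ‖((1 - Real.cos s : ℝ):ℂ) + ((Real.sin s : ℝ):ℂ) * Complex.I‖^2 ≤ s^2 := by
    rw [h5, h6]; exact h7
  calc ‖((1 - Real.cos s : ℝ):ℂ) + ((Real.sin s : ℝ):ℂ) * Complex.I‖
      = Real.sqrt (‖((1 - Real.cos s : ℝ):ℂ) + ((Real.sin s : ℝ):ℂ) * Complex.I‖^2) :=
        (Real.sqrt_sq (norm_nonneg _)).symm
    _ ≤ Real.sqrt (s^2) := Real.sqrt_le_sqrt h8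
    _ = |s| := Real.sqrt_sq_eq_abs s

theorem mem_lpSet_mul {p μ : ℤ → ℝ} (hp : ∀ k, 1 ≤ p k) (hμ : ∀ k, 0 ≤ μ k)
    {F G : ℝ → ℂ} {c : ℝ} (hc : 0 < c)
    (hFG : ∀ k, ‖fcoeff F k‖ ≤ c * ‖fcoeff G k‖)
    {a : ℝ} (ha : a ∈ lpSet p μ G) : c * a ∈ lpSet p μ F := by
  obtain ⟨hapos, hsum, hle⟩ := ha
  have hterm : ∀ k, μ k * (‖fcoeff F k‖ / (c*a))^(p k) ≤
      μ k * (‖fcoeff G k‖ / a)^(p k) := by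
    intro k
    apply mul_le_mul_of_nonneg_left _ (hμ k)
    apply Real.rpow_le_rpow (by positivity) _ (le_trans zero_le_one (hp k))
    have h1 : ‖fcoeff F k‖ / (c*a) ≤ (c * ‖fcoeff G k‖) / (c*a) :=
      div_le_div_of_nonneg_right (hFG k) (by positivity)
    rwa [mul_div_mul_left _ _ (ne_of_gt hc)] at h1
  have hnn : ∀ k : ℤ, 0 ≤ μ k * (‖fcoeff F k‖ / (c*a))^(p k) := fun k =>
    mul_nonneg (hμ k) (Real.rpow_nonneg (by positivity) _)
  have hsum' : Summable (fun k : ℤ => μ k * (‖fcoeff F k‖ / (c*a))^(p k)) :=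
    Summable.of_nonneg_of_le hnn hterm hsum
  exact ⟨by positivity, hsum', (Summable.tsum_le_tsum hterm hsum' hsum).trans hle⟩

theorem luxNorm_le_mul {p μ : ℤ → ℝ} (hp : ∀ k, 1 ≤ p k) (hμ : ∀ k, 0 ≤ μ k)
    {F G : ℝ → ℂ} {c : ℝ} (hc : 0 < c)
    (hFG : ∀ k, ‖fcoeff F k‖ ≤ c * ‖fcoeff G k‖)
    (hG : (lpSet p μ G).Nonempty) : luxNorm p μ F ≤ c * luxNorm p μ G := by
  have hbdd : BddBelow (lpSet p μ F) := ⟨0, fun x hx => hx.1.le⟩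
  have h1 : ∀ a ∈ lpSet p μ G, sInf (lpSet p μ F) ≤ c * a := fun a ha =>
    csInf_le hbdd (mem_lpSet_mul hp hμ hc hFG ha)
  have h2 : sInf (lpSet p μ F) / c ≤ sInf (lpSet p μ G) := by
    apply le_csInf hG
    intro a ha
    rw [div_le_iff₀ hc]
    calc sInf (lpSet p μ F) ≤ c * a := h1 a ha
      _ = a * c := mul_comm c a
  rw [luxNorm, luxNorm]
  calc sInf (lpSet p μ F) = (sInf (lpSet p μ F) / c) * c := by field_simp
    _ ≤ sInf (lpSet p μ G) * c := mul_le_mul_of_nonneg_right h2 hc.le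
    _ = c * sInf (lpSet p μ G) := mul_comm _ _

/-- if `f^{(β)} = g ∈ S_{p,μ}` exists (ψ-derivative with `ψ_k = |k|^{−β}`),
then `ω_α(f,δ)_{p,μ} ≤ δ^β ω_{α−β}(f^{(β)},δ)_{p,μ}`. -/
theorem stmt_5 (K : ℝ) (p μ : ℤ → ℝ) (hp : ∀ k : ℤ, 1 ≤ p k ∧ p k ≤ K)
    (hμ : ∀ k : ℤ, 0 ≤ μ k) (f : ℝ → ℂ) (hf : MemS p μ f)
    (α β : ℝ) (hβ : 0 < β) (hβα : β ≤ α) (δ : ℝ) (hδ : 0 < δ)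
    (g : ℝ → ℂ) (hg : IsPsiDeriv (fun k : ℤ => ((|(k : ℝ)| ^ (-β) : ℝ) : ℂ)) f g)
    (hgS : MemS p μ g) :
    modulus p μ α f δ ≤ δ ^ β * modulus p μ (α - β) g δ := by
  obtain ⟨hgper, hgint, hg0, hgk⟩ := hg
  obtain ⟨hfper, hfint, hfne⟩ := hf
  obtain ⟨-, -, hgne⟩ := hgS
  have hp1 : ∀ k, 1 ≤ p k := fun k => (hp k).1
  have hαβ : (0:ℝ) ≤ α - β := by linarith
  have hα : (0:ℝ) ≤ α := by linarith
  have hδβpos : (0:ℝ) < δ ^ β := Real.rpow_pos_of_pos hδ β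
  have hc2pos : (0:ℝ) < (2:ℝ) ^ (α - β) := Real.rpow_pos_of_pos two_pos _
  -- basic facts about z = -(exp(-(I k h)))
  have hznorm : ∀ (k : ℤ) (h : ℝ),
      ‖-(Complex.exp (-(Complex.I * (k:ℂ) * (h:ℂ))))‖ ≤ 1 := by
    intro k h
    rw [norm_neg, norm_exp_neg_I_int]
  have hone_le : ∀ (k : ℤ) (h : ℝ),
      ‖1 + -(Complex.exp (-(Complex.I * (k:ℂ) * (h:ℂ))))‖ ≤ |(k:ℝ)| * |h| := by
    intro k h
    have h1 : (1:ℂ) + -(Complex.exp (-(Complex.I * (k:ℂ) * (h:ℂ)))) =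
        1 - Complex.exp (-(Complex.I * ((((k:ℝ) * h : ℝ)):ℂ))) := by
      push_cast
      ring_nf
    rw [h1]
    calc ‖(1:ℂ) - Complex.exp (-(Complex.I * ((((k:ℝ) * h : ℝ)):ℂ)))‖ ≤ |(k:ℝ) * h| :=
          norm_one_sub_exp _
      _ = |(k:ℝ)| * |h| := abs_mul _ _
  have hone_le2 : ∀ (k : ℤ) (h : ℝ),
      ‖1 + -(Complex.exp (-(Complex.I * (k:ℂ) * (h:ℂ))))‖ ≤ 2 := by
    intro k h
    calc ‖1 + -(Complex.exp (-(Complex.I * (k:ℂ) * (h:ℂ))))‖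
        ≤ ‖(1:ℂ)‖ + ‖-(Complex.exp (-(Complex.I * (k:ℂ) * (h:ℂ))))‖ := norm_add_le _ _
      _ ≤ 1 + 1 := by
          have := hznorm k h
          rw [norm_one]
          linarith
      _ = 2 := by norm_num
  -- key2
  have key2 : ∀ (h : ℝ) (k : ℤ), ‖fcoeff (fracDiff (α - β) h g) k‖ ≤
      (2:ℝ) ^ (α - β) * ‖fcoeff g k‖ := by
    intro h k
    rw [fcoeff_fracDiff hαβ hgper hgint h k, norm_mul]
    apply mul_le_mul_of_nonneg_right _ (norm_nonneg _)
    calc ‖mS (α-β) (-(Complex.exp (-(Complex.I * (k:ℂ) * (h:ℂ)))))‖ =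
        ‖mS (α-β) (-(Complex.exp (-(Complex.I * (k:ℂ) * (h:ℂ)))))‖ :=
          rfl
      _ ≤ ‖1 + -(Complex.exp (-(Complex.I * (k:ℂ) * (h:ℂ))))‖ ^ (α - β) :=
          norm_mS_le hαβ (hznorm k h)
      _ ≤ (2:ℝ) ^ (α - β) :=
          Real.rpow_le_rpow (norm_nonneg _) (hone_le2 k h) hαβ
  -- key1
  have key1 : ∀ (h : ℝ), |h| ≤ δ → ∀ k : ℤ,
      ‖fcoeff (fracDiff α h f) k‖ ≤
        δ ^ β * ‖fcoeff (fracDiff (α - β) h g) k‖ := by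
    intro h hh k
    rw [fcoeff_fracDiff hα hfper hfint h k, fcoeff_fracDiff hαβ hgper hgint h k, norm_mul,
      norm_mul]
    set z : ℂ := -(Complex.exp (-(Complex.I * (k:ℂ) * (h:ℂ)))) with hz
    have hz1 : ‖z‖ ≤ 1 := hznorm k h
    have hsplit : mS α z = mS β z * mS (α - β) z := by
      rw [mS_mul hβ.le hαβ hz1]
      congr 1
      ring
    rw [hsplit, norm_mul]
    have hmsβ : ‖mS β z‖ ≤ ‖1 + z‖ ^ β := by
      exact norm_mS_le hβ.le hz1
    by_cases hk : k = 0
    · -- k = 0 : ‖1+z‖ = 0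
      subst hk
      have hz0 : (1:ℂ) + z = 0 := by
        rw [hz]
        simp
      have h0 : ‖mS β z‖ ≤ 0 := by
        refine hmsβ.trans ?_
        rw [hz0, norm_zero, Real.zero_rpow (ne_of_gt hβ)]
      have h0' : ‖mS β z‖ = 0 :=
        le_antisymm h0 (norm_nonneg _)
      rw [h0', zero_mul, zero_mul]
      positivity
    · -- k ≠ 0
      have hkpos : (0:ℝ) < |(k:ℝ)| := by
        rw [abs_pos]
        exact_mod_cast hk
      have hψ : ‖fcoeff f k‖ = ‖fcoeff g k‖ * |(k:ℝ)| ^ (-β) := by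
        have hψne : ((|(k:ℝ)| ^ (-β) : ℝ) : ℂ) ≠ 0 := by
          simp only [ne_eq, Complex.ofReal_eq_zero]
          exact ne_of_gt (Real.rpow_pos_of_pos hkpos _)
        have hf' : fcoeff f k = fcoeff g k * ((|(k:ℝ)| ^ (-β) : ℝ) : ℂ) := by
          rw [hgk k hk]
          field_simp
        rw [hf', norm_mul, Complex.norm_real, Real.norm_eq_abs,
          abs_of_nonneg (Real.rpow_nonneg (abs_nonneg _) _)]
      rw [hψ]
      have hchain : ‖mS β z‖ * ‖mS (α-β) z‖ *
          (‖fcoeff g k‖ * |(k:ℝ)| ^ (-β)) ≤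
          (‖1 + z‖ ^ β * |(k:ℝ)| ^ (-β)) *
            (‖mS (α-β) z‖ * ‖fcoeff g k‖) := by
        calc ‖mS β z‖ * ‖mS (α-β) z‖ *
            (‖fcoeff g k‖ * |(k:ℝ)| ^ (-β))
            = ‖mS β z‖ *
              (‖mS (α-β) z‖ * ‖fcoeff g k‖ * |(k:ℝ)| ^ (-β)) := by ring
          _ ≤ ‖1 + z‖ ^ β *
              (‖mS (α-β) z‖ * ‖fcoeff g k‖ * |(k:ℝ)| ^ (-β)) := by
              apply mul_le_mul_of_nonneg_right hmsβ
              have h1 : (0:ℝ) ≤ ‖mS (α-β) z‖ := norm_nonneg _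
              have h2 : (0:ℝ) ≤ ‖fcoeff g k‖ := norm_nonneg _
              have h3 : (0:ℝ) ≤ |(k:ℝ)| ^ (-β) := Real.rpow_nonneg (abs_nonneg _) _
              positivity
          _ = (‖1 + z‖ ^ β * |(k:ℝ)| ^ (-β)) *
              (‖mS (α-β) z‖ * ‖fcoeff g k‖) := by ring
      refine hchain.trans ?_
      apply mul_le_mul_of_nonneg_right _
        (mul_nonneg (norm_nonneg _) (norm_nonneg _))
      -- ‖1+z‖^β * |k|^{-β} ≤ δ^β
      calc ‖1 + z‖ ^ β * |(k:ℝ)| ^ (-β)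
          ≤ (|(k:ℝ)| * |h|) ^ β * |(k:ℝ)| ^ (-β) := by
            apply mul_le_mul_of_nonneg_right
              (Real.rpow_le_rpow (norm_nonneg _) (hone_le k h) hβ.le)
              (Real.rpow_nonneg (abs_nonneg _) _)
        _ = |(k:ℝ)| ^ β * |h| ^ β * |(k:ℝ)| ^ (-β) := by
            rw [Real.mul_rpow (abs_nonneg _) (abs_nonneg _)]
        _ = |h| ^ β := by
            rw [mul_comm (|(k:ℝ)| ^ β), mul_assoc, ← Real.rpow_add hkpos]
            simp
        _ ≤ δ ^ β := Real.rpow_le_rpow (abs_nonneg _) hh hβ.le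
  -- assemble
  haveI hidx : Nonempty {h : ℝ // |h| ≤ δ} := ⟨⟨0, by simp [hδ.le]⟩⟩
  have hgmem : ∀ h : ℝ, (lpSet p μ (fracDiff (α - β) h g)).Nonempty := by
    intro h
    obtain ⟨a, ha⟩ := hgne
    exact ⟨_, mem_lpSet_mul hp1 hμ hc2pos (key2 h) ha⟩
  have hub : ∀ h : {h : ℝ // |h| ≤ δ},
      luxNorm p μ (fracDiff (α - β) h.1 g) ≤ (2:ℝ) ^ (α - β) * luxNorm p μ g :=
    fun h => luxNorm_le_mul hp1 hμ hc2pos (key2 h.1) hgne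
  have hbdd : BddAbove (Set.range fun h : {h : ℝ // |h| ≤ δ} =>
      luxNorm p μ (fracDiff (α - β) h.1 g)) := by
    refine ⟨(2:ℝ) ^ (α - β) * luxNorm p μ g, ?_⟩
    rintro x ⟨h, rfl⟩
    exact hub h
  rw [modulus]
  apply ciSup_le
  intro h
  have step1 : luxNorm p μ (fracDiff α h.1 f) ≤
      δ ^ β * luxNorm p μ (fracDiff (α - β) h.1 g) :=
    luxNorm_le_mul hp1 hμ hδβpos (key1 h.1 h.2) (hgmem h.1)
  have step2 : luxNorm p μ (fracDiff (α - β) h.1 g) ≤ modulus p μ (α - β) g δ :=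
    le_ciSup hbdd h
  calc luxNorm p μ (fracDiff α h.1 f) ≤ δ ^ β * luxNorm p μ (fracDiff (α - β) h.1 g) := step1
    _ ≤ δ ^ β * modulus p μ (α - β) g δ := mul_le_mul_of_nonneg_left step2 hδβpos.le
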